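/- Let E be a complex Banach space, K ⊆ E compact, and φ : 𝒫_N(K) → ℂ a character of the uniform algebra 𝒫_N(K). If the restriction of φ to E* (viewed inside 𝒫_N(K) as 1-homogeneous polynomials) is represented by evaluation at some a ∈ E (i.e., φ(ψ) = ψ(a) for all ψ ∈ E*), then for every n-homogeneous nuclear polynomial P = Σ_i ψ_i^n (with Σ‖ψ_i‖^n < ∞) one has φ(P) = P(a), and consequently |P(a)| ≤ ‖P‖_K, i.e., a lies in the nuclear polynomially convex hull of K. -/

import Mathlib

/-- `P : E → ℂ` is (an affine combination of) nuclear polynomials. -/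
def IsNuclearPoly {E : Type*} [NormedAddCommGroup E] [NormedSpace ℂ E]
    (P : E → ℂ) : Prop :=
  ∃ (N : ℕ) (c : ℂ) (ψ : ℕ → ℕ → E →L[ℂ] ℂ),
    (∀ k, 1 ≤ k → k ≤ N → Summable fun i => ‖ψ k i‖ ^ k) ∧
    ∀ x, P x = c + ∑ k ∈ Finset.Icc 1 N, ∑' i, (ψ k i x) ^ k

section Aux

variable {E : Type*} [NormedAddCommGroup E] [NormedSpace ℂ E] {K : Set E}

lemma aux_summable_pow (ψ : ℕ → E →L[ℂ] ℂ) (n : ℕ)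
    (hsum : Summable fun i => ‖ψ i‖ ^ n) (x : E) :
    Summable fun i => (ψ i x) ^ n := by
  apply Summable.of_norm_bounded (hsum.mul_right (‖x‖ ^ n))
  intro i
  rw [norm_pow, ← mul_pow]
  exact pow_le_pow_left₀ (norm_nonneg _) ((ψ i).le_opNorm x) n

lemma aux_memS (n : ℕ) (hn : 1 ≤ n) (ψ : ℕ → E →L[ℂ] ℂ)
    (hsum : Summable fun i => ‖ψ i‖ ^ n) (h : C(K, ℂ))
    (hh : ∀ x : K, h x = ∑' i, (ψ i x) ^ n) :
    ∃ P : E → ℂ, IsNuclearPoly P ∧ ∀ x : K, h x = P x := by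
  refine ⟨fun x => ∑' i, (ψ i x) ^ n,
    ⟨n, 0, fun k i => if k = n then ψ i else 0, ?_, ?_⟩, hh⟩
  · intro k hk1 _
    by_cases hk : k = n
    · subst hk; simpa using hsum
    · have : (fun i => ‖(fun k i => if k = n then ψ i else 0 : ℕ → ℕ → E →L[ℂ] ℂ) k i‖ ^ k)
          = fun _ => (0 : ℝ) := by
        funext i
        simp [if_neg hk, zero_pow (by omega : k ≠ 0)]
      rw [this]
      exact summable_zero
  · intro x
    rw [zero_add, Finset.sum_eq_single n]
    · simp
    · intro k hk hkn
      have hk1 : 1 ≤ k := (Finset.mem_Icc.mp hk).1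
      simp [if_neg hkn, zero_pow (by omega : k ≠ 0)]
    · intro hn'
      exact absurd (Finset.mem_Icc.mpr ⟨hn, le_refl n⟩) hn'

lemma aux_single_memS (k : ℕ) (hk : 1 ≤ k) (ψ : E →L[ℂ] ℂ) (h : C(K, ℂ))
    (hh : ∀ x : K, h x = (ψ x) ^ k) :
    ∃ P : E → ℂ, IsNuclearPoly P ∧ ∀ x : K, h x = P x := by
  apply aux_memS k hk (fun i => if i = 0 then ψ else 0)
  · apply summable_of_ne_finset_zero (s := {0})
    intro i hi
    simp only [Finset.mem_singleton] at hi
    simp [if_neg hi, zero_pow (by omega : k ≠ 0)]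
  · intro x
    rw [hh x]
    rw [tsum_eq_sum (s := {0}) (by
      intro i hi
      simp only [Finset.mem_singleton] at hi
      simp [if_neg hi, zero_pow (by omega : k ≠ 0)])]
    simp

lemma aux_finsum_memS (n : ℕ) (hn : 1 ≤ n) (ψ : ℕ → E →L[ℂ] ℂ) (m : ℕ) (h : C(K, ℂ))
    (hh : ∀ x : K, h x = ∑ i ∈ Finset.range m, (ψ i x) ^ n) :
    ∃ P : E → ℂ, IsNuclearPoly P ∧ ∀ x : K, h x = P x := by
  apply aux_memS n hn (fun i => if i < m then ψ i else 0)
  · apply summable_of_ne_finset_zero (s := Finset.range m)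
    intro i hi
    simp only [Finset.mem_range] at hi
    simp [if_neg hi, zero_pow (by omega : n ≠ 0)]
  · intro x
    rw [hh x]
    rw [tsum_eq_sum (s := Finset.range m) (by
      intro i hi
      simp only [Finset.mem_range] at hi
      simp [if_neg hi, zero_pow (by omega : n ≠ 0)])]
    apply Finset.sum_congr rfl
    intro i hi
    simp only [Finset.mem_range] at hi
    rw [if_pos hi]

end Aux

set_option maxHeartbeats 1000000 in
/-- A character `φ` of `𝒫_N(K)` whose restriction to `E*` is represented by
evaluation at `a ∈ E` satisfies `φ(P) = P(a)` for every `n`-homogeneous nuclear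
polynomial `P = ∑ᵢ ψᵢⁿ`, and consequently `|P(a)| ≤ ‖P‖_K`, i.e. `a ∈ K̂_N`. -/
theorem character_of_nuclear_algebra_eval
    (E : Type*) [NormedAddCommGroup E] [NormedSpace ℂ E] [CompleteSpace E]
    (K : Set E) (hK : IsCompact K) (hKne : K.Nonempty)
    (PN : Set C(K, ℂ))
    (hPN : PN = closure {h : C(K, ℂ) | ∃ P : E → ℂ, IsNuclearPoly P ∧ ∀ x : K, h x = P x})
    (φ : C(K, ℂ) → ℂ)
    (hadd : ∀ f g, f ∈ PN → g ∈ PN → φ (f + g) = φ f + φ g)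
    (hsmul : ∀ (c : ℂ) f, f ∈ PN → φ (c • f) = c * φ f)
    (hmul : ∀ f g, f ∈ PN → g ∈ PN → φ (f * g) = φ f * φ g)
    (hne : ∃ f ∈ PN, φ f ≠ 0)
    (hbd : ∀ f ∈ PN, ‖φ f‖ ≤ ⨆ x : K, ‖f x‖)
    (a : E)
    (hrep : ∀ (ψ : E →L[ℂ] ℂ) (h : C(K, ℂ)), (∀ x : K, h x = ψ x) → φ h = ψ a) :
    ∀ (n : ℕ), 1 ≤ n → ∀ ψ : ℕ → E →L[ℂ] ℂ, (Summable fun i => ‖ψ i‖ ^ n) →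
      ∀ h : C(K, ℂ), (∀ x : K, h x = ∑' i, (ψ i x) ^ n) →
        φ h = ∑' i, (ψ i a) ^ n ∧
          ‖∑' i, (ψ i a) ^ n‖ ≤ ⨆ x : K, ‖h x‖ := by
  intro n hn ψ hsum h hh
  haveI : Nonempty K := hKne.to_subtype
  have hS : {h : C(K, ℂ) | ∃ P : E → ℂ, IsNuclearPoly P ∧ ∀ x : K, h x = P x} ⊆ PN := by
    rw [hPN]; exact subset_closure
  -- the linear functionals as continuous maps on K
  set g : ℕ → C(K, ℂ) :=
    fun i => ⟨fun x => ψ i x, (ψ i).continuous.comp continuous_subtype_val⟩ with hg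
  have hg_apply : ∀ i (x : K), g i x = ψ i x := fun i x => rfl
  have hg_pow_apply : ∀ i k (x : K), (g i ^ k) x = (ψ i x) ^ k := by
    intro i k x
    rw [ContinuousMap.pow_apply]
    rfl
  have hg_pow_mem : ∀ i k, 1 ≤ k → (g i) ^ k ∈ PN := by
    intro i k hk
    exact hS (aux_single_memS k hk (ψ i) _ (hg_pow_apply i k))
  -- φ on powers of linear functionals
  have hφ_pow : ∀ i k, 1 ≤ k → φ ((g i) ^ k) = (ψ i a) ^ k := by
    intro i k hk
    induction k, hk using Nat.le_induction with
    | base =>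
      rw [pow_one, pow_one]
      exact hrep (ψ i) (g i) (hg_apply i)
    | succ k hk ih =>
      have h1 : (g i) ^ (k + 1) = (g i) ^ k * (g i) := pow_succ _ _
      rw [h1, hmul _ _ (hg_pow_mem i k hk) (by simpa using hg_pow_mem i 1 le_rfl), ih,
        hrep (ψ i) (g i) (hg_apply i), pow_succ]
  -- partial sums
  set Hm : ℕ → C(K, ℂ) := fun m => ∑ i ∈ Finset.range m, (g i) ^ n with hHm
  have hHm_apply : ∀ m (x : K), Hm m x = ∑ i ∈ Finset.range m, (ψ i x) ^ n := by
    intro m x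
    simp only [hHm, ContinuousMap.coe_sum, Finset.sum_apply]
    exact Finset.sum_congr rfl fun i _ => hg_pow_apply i n x
  have hHm_mem : ∀ m, Hm m ∈ PN := by
    intro m
    exact hS (aux_finsum_memS n hn ψ m _ (hHm_apply m))
  -- zero is in PN
  have h0_mem : (0 : C(K, ℂ)) ∈ PN := by
    apply hS
    refine ⟨fun _ => 0, ⟨0, 0, fun _ _ => 0, fun k hk1 hk2 => by omega, fun x => by simp⟩,
      fun x => rfl⟩
  have hφ0 : φ 0 = 0 := by
    have h1 := hadd 0 0 h0_mem h0_mem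
    rw [add_zero] at h1
    have := h1.symm
    nth_rewrite 1 [← add_zero (φ 0)] at h1
    exact (add_left_cancel h1).symm
  have hφHm : ∀ m, φ (Hm m) = ∑ i ∈ Finset.range m, (ψ i a) ^ n := by
    intro m
    induction m with
    | zero => simpa [hHm] using hφ0
    | succ m ih =>
      have h1 : Hm (m + 1) = Hm m + (g m) ^ n := by
        simp [hHm, Finset.sum_range_succ]
      rw [h1, hadd _ _ (hHm_mem m) (hg_pow_mem m n hn), ih, hφ_pow m n hn,
        Finset.sum_range_succ]
  -- summability pointwise
  have hsax : ∀ x : E, Summable fun i => (ψ i x) ^ n := aux_summable_pow ψ n hsum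
  -- value of h - Hm m
  have hdiff_apply : ∀ m (x : K), (h - Hm m) x = ∑' i, (ψ (i + m) x) ^ n := by
    intro m x
    have h1 := Summable.sum_add_tsum_nat_add (f := fun i => (ψ i (x : E)) ^ n) m (hsax x)
    rw [ContinuousMap.sub_apply, hh x, hHm_apply m x]
    rw [sub_eq_iff_eq_add']
    exact h1.symm
  have hdiff_mem : ∀ m, h - Hm m ∈ PN := by
    intro m
    exact hS (aux_memS n hn (fun i => ψ (i + m))
      ((summable_nat_add_iff m).mpr hsum) _ (hdiff_apply m))
  -- norm bound on K
  obtain ⟨C, hC⟩ := hK.isBounded.exists_norm_le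
  have hC0 : 0 ≤ C := le_trans (norm_nonneg _) (hC _ hKne.choose_spec)
  set tail : ℕ → ℝ := fun m => ∑' i, ‖ψ (i + m)‖ ^ n with htail
  have hbound : ∀ m (x : K), ‖(h - Hm m) x‖ ≤ tail m * C ^ n := by
    intro m x
    rw [hdiff_apply m x]
    have hsumm : Summable fun i => ‖ψ (i + m)‖ ^ n := (summable_nat_add_iff m).mpr hsum
    have hle : ∀ i, ‖(ψ (i + m) (x : E)) ^ n‖ ≤ ‖ψ (i + m)‖ ^ n * C ^ n := by
      intro i
      rw [norm_pow, ← mul_pow]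
      apply pow_le_pow_left₀ (norm_nonneg _)
      exact le_trans ((ψ (i + m)).le_opNorm _)
        (mul_le_mul_of_nonneg_left (hC _ x.2) (norm_nonneg _))
    have hsn : Summable fun i => ‖(ψ (i + m) (x : E)) ^ n‖ :=
      Summable.of_nonneg_of_le (fun i => norm_nonneg _) hle (hsumm.mul_right _)
    calc ‖∑' i, (ψ (i + m) (x : E)) ^ n‖ ≤ ∑' i, ‖(ψ (i + m) (x : E)) ^ n‖ :=
          norm_tsum_le_tsum_norm hsn
      _ ≤ ∑' i, ‖ψ (i + m)‖ ^ n * C ^ n := Summable.tsum_le_tsum hle hsn (hsumm.mul_right _)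
      _ = tail m * C ^ n := tsum_mul_right
  have hφdiff : ∀ m, ‖φ (h - Hm m)‖ ≤ tail m * C ^ n := by
    intro m
    refine le_trans (hbd _ (hdiff_mem m)) ?_
    exact ciSup_le fun x => hbound m x
  have hkey : ∀ m, φ h - ∑ i ∈ Finset.range m, (ψ i a) ^ n = φ (h - Hm m) := by
    intro m
    have h1 := hadd (h - Hm m) (Hm m) (hdiff_mem m) (hHm_mem m)
    rw [sub_add_cancel] at h1
    rw [h1, hφHm m]
    ring
  -- tail → 0
  have htail0 : Filter.Tendsto tail Filter.atTop (nhds 0) :=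
    tendsto_sum_nat_add fun i => ‖ψ i‖ ^ n
  have hB0 : Filter.Tendsto (fun m => tail m * C ^ n) Filter.atTop (nhds 0) := by
    simpa using htail0.mul_const (C ^ n)
  have hnorm0 : Filter.Tendsto
      (fun m => ‖(∑ i ∈ Finset.range m, (ψ i a) ^ n) - φ h‖) Filter.atTop (nhds 0) := by
    apply squeeze_zero (fun m => norm_nonneg _) _ hB0
    intro m
    calc ‖(∑ i ∈ Finset.range m, (ψ i a) ^ n) - φ h‖
        = ‖φ h - ∑ i ∈ Finset.range m, (ψ i a) ^ n‖ := norm_sub_rev _ _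
      _ = ‖φ (h - Hm m)‖ := by rw [hkey m]
      _ ≤ tail m * C ^ n := hφdiff m
  have h1 : Filter.Tendsto (fun m => ∑ i ∈ Finset.range m, (ψ i a) ^ n)
      Filter.atTop (nhds (φ h)) := by
    rw [tendsto_iff_norm_sub_tendsto_zero]
    exact hnorm0
  have h2 : Filter.Tendsto (fun m => ∑ i ∈ Finset.range m, (ψ i a) ^ n)
      Filter.atTop (nhds (∑' i, (ψ i a) ^ n)) := (hsax a).hasSum.tendsto_sum_nat
  have heq : φ h = ∑' i, (ψ i a) ^ n := tendsto_nhds_unique h1 h2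
  refine ⟨heq, ?_⟩
  rw [← heq]
  exact hbd h (hS (aux_memS n hn ψ hsum h hh))
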